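/- Let (E, ℛ, τ) satisfy conditions (i), (ii), (iii). Given e ∈ E×, pairwise distinct R_1, …, R_r ∈ ℛ(e), and for each 1 ≤ i ≤ r an element ε_i ∈ E(⋁R_i) ∪ {e − ⋁R_i} ⊆ ℤ[E×], set ε := ∏_{i=1}^r ε_i and, for 1 ≤ j ≤ r, ε(ĵ) := ∏_{i≠j} ε_i (interpreted as e when r = 1). Then for every 1 ≤ j ≤ r: if ε(ĵ) ≠ 0, then ε·ε(ĵ) = ε and ε ≠ ε(ĵ). -/

import Mathlib

set_option linter.unusedSectionVars false

/-- A *semilattice with zero*: a commutative idempotent semigroup with an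
absorbing element `0`. -/
class SemilatticeWithZero (E : Type) extends CommSemigroup E, Zero E where
  mul_idem : ∀ e : E, e * e = e
  zero_mul : ∀ e : E, 0 * e = 0

namespace IndRes

variable {E : Type} [SemilatticeWithZero E]

/-- `single e c`, viewed in the semigroup algebra `ℤ[E]`. -/
noncomputable def sgl (e : E) (c : ℤ) : MonoidAlgebra ℤ E := MonoidAlgebra.ofCoeff (Finsupp.single e c)

/-- Truncation map deleting the coefficient at `0`. -/
noncomputable def T (x : MonoidAlgebra ℤ E) : MonoidAlgebra ℤ E := x - sgl 0 (x.coeff 0)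

lemma sgl_apply_self (e : E) (c : ℤ) : (sgl e c).coeff e = c := Finsupp.single_eq_same

lemma sgl_apply_ne (e d : E) (c : ℤ) (h : e ≠ d) : (sgl e c).coeff d = 0 := Finsupp.single_eq_of_ne h.symm

lemma sgl_add (e : E) (c d : ℤ) : sgl e (c + d) = sgl e c + sgl e d := congrArg MonoidAlgebra.ofCoeff (Finsupp.single_add e c d)

lemma sgl_sub (e : E) (c d : ℤ) : sgl e (c - d) = sgl e c - sgl e d := congrArg MonoidAlgebra.ofCoeff (Finsupp.single_sub e c d)

lemma T_apply_zero (x : MonoidAlgebra ℤ E) : (T x).coeff 0 = 0 := by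
  show ((x - sgl 0 (x.coeff 0) : MonoidAlgebra ℤ E)).coeff 0 = 0
  rw [MonoidAlgebra.coeff_sub, Finsupp.sub_apply, sgl_apply_self, sub_self]

/-- `ℤ[E^×]`, realized as the additive subgroup of the semigroup algebra
`ℤ[E]` consisting of the elements whose coefficient at `0` vanishes; it is the free
`ℤ`-module with basis `E^× = E \ {0}`. -/
noncomputable def ZS (E : Type) [SemilatticeWithZero E] : AddSubgroup (MonoidAlgebra ℤ E) where
  carrier := {x | x.coeff 0 = 0}
  zero_mem' := rfl
  add_mem' := by
    intro a b ha hb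
    simp only [Set.mem_setOf_eq] at *
    rw [MonoidAlgebra.coeff_add, Finsupp.add_apply, ha, hb, add_zero]
  neg_mem' := by
    intro a ha
    simp only [Set.mem_setOf_eq] at *
    rw [MonoidAlgebra.coeff_neg, Finsupp.neg_apply, ha, neg_zero]

/-- The integral semigroup ring `ℤ[E^×]`. -/
abbrev ZE (E : Type) [SemilatticeWithZero E] : Type := ↥(ZS E)

lemma mem_ZS {x : MonoidAlgebra ℤ E} : x ∈ ZS E ↔ x.coeff 0 = 0 := Iff.rfl

lemma T_eq_self {x : MonoidAlgebra ℤ E} (h : x.coeff 0 = 0) : T x = x := by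
  simp [T, h, sgl]

lemma T_add (a b : MonoidAlgebra ℤ E) : T (a + b) = T a + T b := by
  unfold T
  rw [show ((a + b).coeff 0) = a.coeff 0 + b.coeff 0 from Finsupp.add_apply a.coeff b.coeff 0, sgl_add]
  abel

lemma T_sub_sgl (x : MonoidAlgebra ℤ E) (m : ℤ) : T (x - sgl 0 m) = T x := by
  unfold T
  have h : ((x - sgl 0 m : MonoidAlgebra ℤ E)).coeff 0 = x.coeff 0 - m := by
    rw [MonoidAlgebra.coeff_sub, Finsupp.sub_apply, sgl_apply_self]
  rw [h, sgl_sub]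
  abel

lemma single_zero_mul (c : ℤ) (b : MonoidAlgebra ℤ E) :
    (sgl 0 c) * b = sgl 0 (((sgl 0 c * b : MonoidAlgebra ℤ E)).coeff 0) := by
  classical
  ext d
  by_cases hd : d = 0
  · subst hd; rw [sgl_apply_self]
  · rw [sgl_apply_ne 0 d _ (Ne.symm hd)]
    by_contra h
    have hmem : d ∈ ((sgl (0:E) c) * b).coeff.support := Finsupp.mem_support_iff.mpr h
    have h2 := MonoidAlgebra.support_coeff_mul_subset (sgl (0:E) c) b hmem
    rw [Finset.mem_mul] at h2
    obtain ⟨a, ha, b', _, hab⟩ := h2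
    have ha' : a = 0 := by
      have := Finsupp.support_single_subset (ha : a ∈ (Finsupp.single (0:E) c).support)
      simpa using this
    exact hd (by rw [← hab, ha', SemilatticeWithZero.zero_mul])

lemma T_mul_left (a b : MonoidAlgebra ℤ E) : T (T a * b) = T (a * b) := by
  have h1 : T a * b = a * b - (sgl 0 (a.coeff 0)) * b := by rw [T, sub_mul]
  rw [h1, single_zero_mul, T_sub_sgl]

lemma T_mul_right (a b : MonoidAlgebra ℤ E) : T (a * T b) = T (a * b) := by
  rw [mul_comm a (T b), T_mul_left, mul_comm]

noncomputable instance : Mul (ZE E) :=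
  ⟨fun x y => ⟨T (x.1 * y.1), T_apply_zero _⟩⟩

lemma ZE.val_mul (x y : ZE E) : (x * y).1 = T (x.1 * y.1) := rfl

noncomputable instance : NonUnitalCommRing (ZE E) :=
  { (inferInstance : AddCommGroup (ZE E)) with
    mul := (· * ·)
    left_distrib := by
      intro x y z
      apply Subtype.ext
      show T (x.1 * (y.1 + z.1)) = T (x.1 * y.1) + T (x.1 * z.1)
      rw [mul_add, T_add]
    right_distrib := by
      intro x y z
      apply Subtype.ext
      show T ((x.1 + y.1) * z.1) = T (x.1 * z.1) + T (y.1 * z.1)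
      rw [add_mul, T_add]
    zero_mul := by
      intro x
      apply Subtype.ext
      show T ((0 : MonoidAlgebra ℤ E) * x.1) = 0
      rw [zero_mul]
      simp [T, sgl]
    mul_zero := by
      intro x
      apply Subtype.ext
      show T (x.1 * (0 : MonoidAlgebra ℤ E)) = 0
      rw [mul_zero]
      simp [T, sgl]
    mul_assoc := by
      intro x y z
      apply Subtype.ext
      show T (T (x.1 * y.1) * z.1) = T (x.1 * T (y.1 * z.1))
      rw [T_mul_left, T_mul_right, mul_assoc]
    mul_comm := by
      intro x y
      apply Subtype.ext
      show T (x.1 * y.1) = T (y.1 * x.1)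
      rw [mul_comm] }

/-- The canonical image of `e ∈ E` in `ℤ[E^×]`: the basis element `e` if `e ≠ 0`,
and `0` if `e = 0`. -/
noncomputable def elt (e : E) : ZE E := ⟨T (sgl e 1), T_apply_zero _⟩

/-- Product of a (nonempty) finite family in a commutative non-unital ring, computed inside
the unitization.  For a nonempty index set this is the iterated product. -/
noncomputable def nprod {ι A : Type} [NonUnitalCommRing A] (s : Finset ι) (f : ι → A) : A :=
  (∏ j ∈ s, (Unitization.inr (f j) : Unitization ℤ A)).snd

/-- The join `⋁_{j ∈ J} x_j = ∑_{∅ ≠ J' ⊆ J} (-1)^{|J'|+1} ∏_{j ∈ J'} x_j`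
of a finite family of idempotents of a commutative non-unital ring. -/
noncomputable def rjoin {ι A : Type} [NonUnitalCommRing A] (s : Finset ι) (f : ι → A) : A :=
  ∑ t ∈ s.powerset.filter (fun t => t.Nonempty), ((-1 : ℤ) ^ (t.card + 1)) • nprod t f

/-- The join `⋁_{j ∈ J} e_j ∈ ℤ[E^×]` of a finite family of elements of `E`:
`∑_{∅ ≠ J' ⊆ J} (-1)^{|J'|+1} ∏_{j ∈ J'} e_j`, where a product whose value in `E`
is `0` contributes `0`. -/
noncomputable def join {ι : Type} (s : Finset ι) (e : ι → E) : ZE E :=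
  rjoin s (fun j => elt (e j))

/-- Iterated product of a nonempty list in a semigroup with zero (the value on the
empty list is the junk value `0`). -/
def listProd : List E → E
  | [] => 0
  | [a] => a
  | a :: b :: l => a * listProd (b :: l)

/-- The product `∏_{j ∈ s} f j ∈ E` of a (nonempty) finite family. -/
noncomputable def eprod {ι : Type} (s : Finset ι) (f : ι → E) : E :=
  listProd (s.toList.map f)

/-- The support `E(x)` of `x ∈ ℤ[E^×]`: the finite set of elements of `E^×` appearing
with a nonzero coefficient in the reduced form of `x`. -/
noncomputable def supp (x : ZE E) : Finset E := x.1.coeff.support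

section Action

variable {Γ : Type} [Group Γ] [MulAction Γ E]

/-- The induced action of `g ∈ Γ` on `ℤ[E^×]`: the `ℤ`-linear map sending a basis
element `e ∈ E^×` to `g • e`.  (When the action fixes `0` — which is the case for an
action by semigroup automorphisms fixing `0` — the truncation `T` is a no-op, and this
is the automorphism of `ℤ[E^×]` induced by `τ_g`.) -/
noncomputable def act (g : Γ) (x : ZE E) : ZE E :=
  ⟨T (MonoidAlgebra.ofCoeff (Finsupp.mapDomain (fun e : E => g • e) x.1.coeff)), T_apply_zero _⟩

end Action



attribute [local instance] Classical.propDecidable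

variable {E : Type} [SemilatticeWithZero E]

/-- A Γ-semilattice structure: the group acts by semigroup automorphisms fixing `0`. -/
def IsGammaSL (Γ E : Type) [Group Γ] [SemilatticeWithZero E] [MulAction Γ E] : Prop :=
  (∀ (g : Γ) (x y : E), g • (x * y) = (g • x) * (g • y)) ∧ (∀ g : Γ, g • (0 : E) = 0)

/-- The set `E_φ`. -/
def Ephi {D : Type} [NonUnitalCommRing D] (φ : ZE E →ₙ+* D) : Set (ZE E) :=
  { x | ∃ (e : E) (J : Finset E), e ≠ 0 ∧ (∀ f ∈ J, f ≠ 0 ∧ f * e = f ∧ f ≠ e) ∧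
      x = elt e - join J (fun f => f) ∧
      φ (elt e) = rjoin J (fun f => φ (elt f)) }

/-- `R` is a finite cover for `e ∈ E^×`. -/
def IsCover (e : E) (R : Finset E) : Prop :=
  (∀ f ∈ R, f ≠ 0 ∧ f * e = f) ∧
  ∀ f' : E, f' ≠ 0 → f' * e = f' → ∃ f ∈ R, f' * f ≠ 0

/-- `ℛ` is a collection of finite covers for `E`. -/
def CovSystem (ℛ : E → Set (Finset E)) : Prop :=
  ∀ e : E, e ≠ 0 → ∀ R ∈ ℛ e, IsCover e R

/-- Condition (i). -/
def CondI (ℛ : E → Set (Finset E)) : Prop :=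
  ∀ d e : E, d ≠ 0 → e ≠ 0 → d * e ≠ 0 → ∀ R ∈ ℛ e,
    d * e ∈ (R.image (fun f => d * f)).erase 0 ∨ (R.image (fun f => d * f)).erase 0 ∈ ℛ (d * e)

/-- Condition (ii). -/
def CondII (ℛ : E → Set (Finset E)) : Prop :=
  ∀ e : E, e ≠ 0 → ∀ r : ℕ, 0 < r → ∀ Rs : Fin r → Finset E,
    Function.Injective Rs → (∀ i, Rs i ∈ ℛ e) → ∀ ε : Fin r → E,
    (∀ i, ε i ∈ supp (join (Rs i) (fun f => f))) → ∀ j : Fin r,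
      (if r = 1 then e else eprod (Finset.univ.erase j) ε) ≠ 0 →
      eprod Finset.univ ε * (if r = 1 then e else eprod (Finset.univ.erase j) ε)
          = eprod Finset.univ ε ∧
      eprod Finset.univ ε ≠ (if r = 1 then e else eprod (Finset.univ.erase j) ε)

/-- Condition (iii). -/
def CondIII (Γ : Type) [Group Γ] [MulAction Γ E] (ℛ : E → Set (Finset E)) : Prop :=
  ∀ (g : Γ) (e : E), e ≠ 0 →
    (fun R : Finset E => R.image (fun f => g • f)) '' (ℛ e) = ℛ (g • e)

/-- `e(𝒮) = ∏_{R ∈ 𝒮} (e - ⋁R) ∈ ℤ[E^×]`. -/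
noncomputable def eS (e : E) (S : Finset (Finset E)) : ZE E :=
  nprod S (fun R => elt e - join R (fun f => f))

/-- `E(E,ℛ) = {e(𝒮) : e ∈ E^×, 𝒮 ⊆ ℛ(e) nonempty finite} ∪ {0} ⊆ ℤ[E^×]`. -/
def EER (ℛ : E → Set (Finset E)) : Set (ZE E) :=
  {x | ∃ (e : E) (S : Finset (Finset E)), e ≠ 0 ∧ S.Nonempty ∧ ↑S ⊆ ℛ e ∧ x = eS e S} ∪ {0}

/-- `R(𝒮,R̃) = {e(𝒮 ∪ {R̃})} ∪ {f ⬝ e(𝒮) : f ∈ R̃, f ⬝ e(𝒮) ≠ 0}`. -/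
noncomputable def RSR (e : E) (S : Finset (Finset E)) (Rt : Finset E) : Finset (ZE E) :=
  insert (eS e (insert Rt S)) ((Rt.image (fun f => elt f * eS e S)).erase 0)

/-- The collection of finite covers `ℛ(E,ℛ)` on `E(E,ℛ)`, assigning to an element
`x = e(𝒮)` of `E(E,ℛ)^×` the covers `R(𝒮,R̃)`, `R̃ ∈ ℛ(e) ∖ 𝒮` (over all ways of
presenting `x` in the form `e(𝒮)`). -/
def RER (ℛ : E → Set (Finset E)) (x : ZE E) : Set (Finset (ZE E)) :=
  {C | ∃ (e : E) (S : Finset (Finset E)) (Rt : Finset E),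
        e ≠ 0 ∧ S.Nonempty ∧ ↑S ⊆ ℛ e ∧ Rt ∈ ℛ e ∧ Rt ∉ S ∧ x = eS e S ∧ C = RSR e S Rt}

/-- The `ℤ`-linear map `ℤ[E₁^×] → ℤ[E₂^×]` induced by a map `θ` from `E₁` to `ℤ[E₂^×]`,
sending a basis element `e' ∈ E₁^×` to `θ e'`. -/
noncomputable def indMap {E₁ E₂ : Type} [SemilatticeWithZero E₁] [SemilatticeWithZero E₂]
    (θ : E₁ → ZE E₂) : ZE E₁ →ₗ[ℤ] ZE E₂ :=
  (Finsupp.linearCombination ℤ θ).comp ((MonoidAlgebra.coeffLinearEquiv ℤ).toLinearMap.comp (ZS E₁).subtype.toIntLinearMap)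

/-- `(E₁, ℛ₁, θ)` is a realization of the construction `(E(E,ℛ), ℛ(E,ℛ))`:
`θ` identifies the abstract Γ-semilattice `E₁` with `E(E,ℛ) ⊆ ℤ[E^×]` (equivariantly,
multiplicatively and preserving `0`), and `ℛ₁` corresponds to `ℛ(E,ℛ)` under this
identification. -/
def Realizes {Γ E E₁ : Type} [Group Γ] [SemilatticeWithZero E] [MulAction Γ E]
    [SemilatticeWithZero E₁] [MulAction Γ E₁]
    (ℛ : E → Set (Finset E)) (ℛ₁ : E₁ → Set (Finset E₁)) (θ : E₁ → ZE E) : Prop :=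
  Function.Injective θ ∧ Set.range θ = EER ℛ ∧ θ 0 = 0 ∧
  (∀ x y : E₁, θ (x * y) = θ x * θ y) ∧
  (∀ (g : Γ) (x : E₁), θ (g • x) = act g (θ x)) ∧
  (∀ e' : E₁, e' ≠ 0 → ∀ C : Finset E₁, C ∈ ℛ₁ e' ↔ C.image θ ∈ RER ℛ (θ e'))

end IndRes

open IndRes

namespace IndRes

attribute [local instance] Classical.propDecidable

variable {E : Type} [SemilatticeWithZero E]

lemma idemE (a : E) : a * a = a := SemilatticeWithZero.mul_idem a
lemma zeroE (a : E) : (0 : E) * a = 0 := SemilatticeWithZero.zero_mul a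
lemma zeroE' (a : E) : a * (0 : E) = 0 := by rw [mul_comm]; exact zeroE a

lemma ZE.val_add' (x y : ZE E) : ((x + y : ZE E) : MonoidAlgebra ℤ E) = x.1 + y.1 := rfl
lemma ZE.val_sub' (x y : ZE E) : ((x - y : ZE E) : MonoidAlgebra ℤ E) = x.1 - y.1 := rfl
lemma ZE.val_zero' : ((0 : ZE E) : MonoidAlgebra ℤ E) = 0 := rfl
lemma ZE.val_smul' (c : ℤ) (x : ZE E) : ((c • x : ZE E) : MonoidAlgebra ℤ E) = c • x.1 := rfl

lemma ZE.val_sum {ι : Type} (s : Finset ι) (f : ι → ZE E) :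
    ((∑ i ∈ s, f i : ZE E) : MonoidAlgebra ℤ E) = ∑ i ∈ s, (f i).1 :=
  map_sum ((ZS E).subtype) f s

lemma T_eq_of_ne {e : E} (c : ℤ) (h : e ≠ 0) : T (sgl e c) = sgl e c :=
  T_eq_self (sgl_apply_ne e 0 c h)

lemma elt_val {e : E} (h : e ≠ 0) : ((elt e : ZE E) : MonoidAlgebra ℤ E) = sgl e 1 :=
  T_eq_of_ne 1 h

lemma elt_zero : (elt (0 : E) : ZE E) = 0 := by
  apply Subtype.ext
  show T (sgl (0:E) 1) = 0
  unfold T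
  rw [sgl_apply_self, sub_self]

lemma sgl_mul (a b : E) : (sgl a 1 : MonoidAlgebra ℤ E) * sgl b 1 = sgl (a * b) 1 := by
  unfold sgl
  simp only [MonoidAlgebra.ofCoeff_single]
  rw [MonoidAlgebra.single_mul_single, one_mul]

lemma elt_mul (a b : E) : (elt (a * b) : ZE E) = elt a * elt b := by
  apply Subtype.ext
  show T (sgl (a*b) 1) = T ((elt a : ZE E).1 * (elt b : ZE E).1)
  show T (sgl (a*b) 1) = T (T (sgl a 1) * T (sgl b 1))
  rw [T_mul_left, T_mul_right, sgl_mul]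

lemma elt_apply {m : E} (a : E) (hm : m ≠ 0) :
    ((elt a : ZE E) : MonoidAlgebra ℤ E).coeff m = if a = m then 1 else 0 := by
  by_cases ha : a = 0
  · subst ha
    rw [elt_zero]
    simp [(Ne.symm hm : (0:E) ≠ m), ZE.val_zero']
  · rw [elt_val ha]
    split
    · next h => subst h; exact sgl_apply_self a 1
    · next h => exact sgl_apply_ne a m 1 h

lemma elt_ne_zero {e : E} (h : e ≠ 0) : (elt e : ZE E) ≠ 0 := by
  intro hc
  have := congrArg (fun x : ZE E => (x : MonoidAlgebra ℤ E).coeff e) hc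
  simp only [elt_apply e h, if_pos rfl, ZE.val_zero'] at this
  exact one_ne_zero (α := ℤ) (by simpa using this)

lemma mem_supp {x : ZE E} {m : E} : m ∈ supp x ↔ (x : MonoidAlgebra ℤ E).coeff m ≠ 0 :=
  Finsupp.mem_support_iff

lemma mem_supp_ne_zero {x : ZE E} {m : E} (h : m ∈ supp x) : m ≠ 0 := by
  intro hm; subst hm
  exact mem_supp.mp h x.2

end IndRes
namespace IndRes

attribute [local instance] Classical.propDecidable

variable {E : Type} [SemilatticeWithZero E]

/-- Explicit coercion into `WithOne E`. -/
def toW (x : E) : WithOne E := WithOne.coe x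

lemma toW_mul (a b : E) : toW (a * b) = toW a * toW b := WithOne.coe_mul a b

lemma toW_inj {a b : E} (h : toW a = toW b) : a = b := WithOne.coe_inj.mp h

lemma listProd_coe : ∀ (l : List E), l ≠ [] →
    toW (listProd l) = (l.map toW).prod
  | [], h => absurd rfl h
  | [a], _ => by simp [listProd, toW]
  | a :: b :: l, _ => by
      rw [show listProd (a :: b :: l) = a * listProd (b :: l) from rfl, toW_mul,
        listProd_coe (b :: l) (by simp)]
      simp [List.prod_cons]

lemma eprod_coe {ι : Type} {s : Finset ι} (hs : s.Nonempty) (f : ι → E) :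
    toW (eprod s f) = ∏ i ∈ s, toW (f i) := by
  unfold eprod
  rw [listProd_coe _ (by simpa using hs.toList_ne_nil), List.map_map,
    ← Finset.prod_map_toList]
  rfl

lemma eprod_singleton {ι : Type} (a : ι) (f : ι → E) : eprod {a} f = f a := by
  unfold eprod
  rw [Finset.toList_singleton]
  rfl

lemma eprod_insert {ι : Type} [DecidableEq ι] {s : Finset ι} {a : ι} (ha : a ∉ s) (hs : s.Nonempty)
    (f : ι → E) : eprod (insert a s) f = f a * eprod s f := by
  apply toW_inj
  rw [eprod_coe (Finset.insert_nonempty a s) f, toW_mul, eprod_coe hs f,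
    Finset.prod_insert ha]

lemma eprod_congr {ι : Type} {s : Finset ι} {f g : ι → E} (h : ∀ i ∈ s, f i = g i) :
    eprod s f = eprod s g := by
  rcases s.eq_empty_or_nonempty with rfl | hs
  · simp [eprod]
  · apply toW_inj
    rw [eprod_coe hs f, eprod_coe hs g]
    exact Finset.prod_congr rfl (fun i hi => by rw [h i hi])

lemma eprod_union {ι : Type} [DecidableEq ι] {s t : Finset ι} (hst : Disjoint s t) (hs : s.Nonempty)
    (ht : t.Nonempty) (f : ι → E) : eprod (s ∪ t) f = eprod s f * eprod t f := by
  apply toW_inj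
  rw [eprod_coe (hs.mono Finset.subset_union_left) f, toW_mul, eprod_coe hs f,
    eprod_coe ht f, Finset.prod_union hst]

lemma eprod_mul_self_mem {ι : Type} {s : Finset ι} {i : ι} (hi : i ∈ s) (f : ι → E) :
    eprod s f * f i = eprod s f := by
  apply toW_inj
  rw [toW_mul, eprod_coe ⟨i, hi⟩ f]
  rw [← Finset.prod_erase_mul s _ hi, mul_assoc]
  congr 1
  exact (toW_mul (f i) (f i)).symm.trans (congrArg toW (idemE (f i)))

lemma eprod_absorb {ι : Type} {s : Finset ι} (hs : s.Nonempty) {f : ι → E} {e : E}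
    (h : ∀ i ∈ s, f i * e = f i) : eprod s f * e = eprod s f := by
  induction hs using Finset.Nonempty.cons_induction with
  | singleton a => rw [eprod_singleton]; exact h a (by simp)
  | cons a s ha hs ih =>
      rw [Finset.cons_eq_insert, eprod_insert ha hs, mul_assoc,
        ih (fun i hi => h i (by simp [hi]))]

lemma mul_eprod {ι : Type} {s : Finset ι} (hs : s.Nonempty) (d : E) (f : ι → E) :
    d * eprod s f = eprod s (fun i => d * f i) := by
  induction hs using Finset.Nonempty.cons_induction with
  | singleton a => rw [eprod_singleton, eprod_singleton]
  | cons a s ha hs ih =>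
      rw [Finset.cons_eq_insert, eprod_insert ha hs, eprod_insert ha hs, ← ih]
      conv_lhs => rw [← idemE d]
      exact mul_mul_mul_comm d d (f a) (eprod s f)

lemma eprod_const {ι : Type} {s : Finset ι} (hs : s.Nonempty) (m : E) :
    eprod s (fun _ => m) = m := by
  induction hs using Finset.Nonempty.cons_induction with
  | singleton a => rw [eprod_singleton]
  | cons a s ha hs ih => rw [Finset.cons_eq_insert, eprod_insert ha hs, ih, idemE]

lemma eprod_erase {ι : Type} [DecidableEq ι] {s : Finset ι} {j : ι} (hj : j ∈ s) (h' : (s.erase j).Nonempty)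
    (f : ι → E) : eprod s f = f j * eprod (s.erase j) f := by
  apply toW_inj
  rw [eprod_coe ⟨j, hj⟩ f, toW_mul, eprod_coe h' f]
  exact (Finset.mul_prod_erase s (fun i => toW (f i)) hj).symm

lemma eprod_image {ι κ : Type} [DecidableEq κ] {u : Finset ι} (g : ι → κ) (hg : Function.Injective g)
    (hu : u.Nonempty) (f : κ → E) : eprod (u.image g) f = eprod u (f ∘ g) := by
  apply toW_inj
  rw [eprod_coe (hu.image g) f, eprod_coe hu (f ∘ g),
    Finset.prod_image (fun a _ b _ h => hg h)]
  rfl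

end IndRes
namespace IndRes

attribute [local instance] Classical.propDecidable

variable {E : Type} [SemilatticeWithZero E]

lemma prod_inr_eq {ι A : Type} [NonUnitalCommRing A] {s : Finset ι} (hs : s.Nonempty)
    (f : ι → A) :
    ∏ j ∈ s, (Unitization.inr (f j) : Unitization ℤ A) = Unitization.inr (nprod s f) := by
  have hfst : (∏ j ∈ s, (Unitization.inr (f j) : Unitization ℤ A)).fst = 0 := by
    induction hs using Finset.Nonempty.cons_induction with
    | singleton a => simp
    | cons a s ha hs ih =>
        rw [Finset.cons_eq_insert, Finset.prod_insert ha, Unitization.fst_mul,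
          Unitization.fst_inr, zero_mul]
  unfold nprod
  refine Unitization.ext ?_ rfl
  rw [Unitization.fst_inr]
  exact hfst

lemma inr_inj {A : Type} [NonUnitalCommRing A] {x y : A}
    (h : (Unitization.inr x : Unitization ℤ A) = Unitization.inr y) : x = y :=
  Unitization.inr_injective h

lemma nprod_singleton {ι A : Type} [NonUnitalCommRing A] (a : ι) (f : ι → A) :
    nprod {a} f = f a := by
  apply inr_inj
  rw [← prod_inr_eq (Finset.singleton_nonempty a) f, Finset.prod_singleton]

lemma nprod_insert {ι A : Type} [DecidableEq ι] [NonUnitalCommRing A] {s : Finset ι} {a : ι} (ha : a ∉ s)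
    (hs : s.Nonempty) (f : ι → A) : nprod (insert a s) f = f a * nprod s f := by
  apply inr_inj
  rw [← prod_inr_eq (Finset.insert_nonempty a s) f, Finset.prod_insert ha,
    prod_inr_eq hs f, Unitization.inr_mul]

lemma nprod_congr {ι A : Type} [NonUnitalCommRing A] {s : Finset ι} {f g : ι → A}
    (h : ∀ i ∈ s, f i = g i) : nprod s f = nprod s g := by
  unfold nprod
  rw [Finset.prod_congr rfl (fun i hi => by rw [h i hi])]

lemma nprod_union {ι A : Type} [DecidableEq ι] [NonUnitalCommRing A] {s t : Finset ι} (hst : Disjoint s t)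
    (hs : s.Nonempty) (ht : t.Nonempty) (f : ι → A) :
    nprod (s ∪ t) f = nprod s f * nprod t f := by
  apply inr_inj
  rw [← prod_inr_eq (hs.mono Finset.subset_union_left) f, Finset.prod_union hst,
    prod_inr_eq hs f, prod_inr_eq ht f, Unitization.inr_mul]

lemma nprod_idem {ι A : Type} [NonUnitalCommRing A] {s : Finset ι} (hs : s.Nonempty)
    {f : ι → A} (h : ∀ i ∈ s, f i * f i = f i) : nprod s f * nprod s f = nprod s f := by
  induction hs using Finset.Nonempty.cons_induction with
  | singleton a => rw [nprod_singleton]; exact h a (by simp)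
  | cons a s ha hs ih =>
      rw [Finset.cons_eq_insert, nprod_insert ha hs,
        mul_mul_mul_comm, h a (by simp), ih (fun i hi => h i (by simp [hi]))]

lemma nprod_absorb {ι A : Type} [NonUnitalCommRing A] {s : Finset ι} (hs : s.Nonempty)
    {f : ι → A} {x : A} (h : ∀ i ∈ s, f i * x = f i) : nprod s f * x = nprod s f := by
  induction hs using Finset.Nonempty.cons_induction with
  | singleton a => rw [nprod_singleton]; exact h a (by simp)
  | cons a s ha hs ih =>
      rw [Finset.cons_eq_insert, nprod_insert ha hs, mul_assoc,
        ih (fun i hi => h i (by simp [hi]))]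

lemma elt_eprod {ι : Type} {s : Finset ι} (hs : s.Nonempty) (f : ι → E) :
    (elt (eprod s f) : ZE E) = nprod s (fun i => elt (f i)) := by
  induction hs using Finset.Nonempty.cons_induction with
  | singleton a => rw [eprod_singleton, nprod_singleton]
  | cons a s ha hs ih =>
      rw [Finset.cons_eq_insert, eprod_insert ha hs, nprod_insert ha hs, elt_mul, ih]

lemma join_expand {ι : Type} (s : Finset ι) (f : ι → E) :
    (join s f : ZE E) = ∑ t ∈ s.powerset.filter (fun t => t.Nonempty),
      ((-1 : ℤ) ^ (t.card + 1)) • elt (eprod t f) := by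
  unfold join rjoin
  refine Finset.sum_congr rfl (fun t ht => ?_)
  rw [elt_eprod (Finset.mem_filter.mp ht).2 f]

lemma coeff_comb {ι : Type} (s : Finset ι) (c : ι → ℤ) (g : ι → E) {m : E} (hm : m ≠ 0) :
    ((∑ t ∈ s, c t • elt (g t) : ZE E) : MonoidAlgebra ℤ E).coeff m
      = ∑ t ∈ s, (if g t = m then c t else 0) := by
  rw [ZE.val_sum]
  rw [MonoidAlgebra.coeff_sum, Finsupp.finset_sum_apply]
  refine Finset.sum_congr rfl (fun t _ => ?_)
  rw [ZE.val_smul', MonoidAlgebra.coeff_smul, Finsupp.smul_apply, elt_apply (g t) hm]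
  split <;> simp

lemma supp_T_subset (z : MonoidAlgebra ℤ E) : (T z).coeff.support ⊆ z.coeff.support := by
  intro m hm
  have hm0 : m ≠ 0 := by
    intro h; subst h; exact (Finsupp.mem_support_iff.mp hm) (T_apply_zero z)
  rw [Finsupp.mem_support_iff] at hm ⊢
  intro hc
  apply hm
  unfold T
  rw [MonoidAlgebra.coeff_sub, Finsupp.sub_apply, hc, sgl_apply_ne 0 m _ (Ne.symm hm0), sub_zero]

lemma supp_mul {x y : ZE E} {m : E} (hm : m ∈ supp (x * y)) :
    ∃ a ∈ supp x, ∃ b ∈ supp y, m = a * b := by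
  have h1 : m ∈ (x.1 * y.1).coeff.support := supp_T_subset _ hm
  have h2 := MonoidAlgebra.support_coeff_mul_subset x.1 y.1 h1
  rw [Finset.mem_mul] at h2
  obtain ⟨a, ha, b, hb, hab⟩ := h2
  exact ⟨a, ha, b, hb, hab.symm⟩

lemma supp_join {ι : Type} {s : Finset ι} {f : ι → E} {m : E}
    (hm : m ∈ supp (join s f : ZE E)) :
    ∃ t : Finset ι, t ⊆ s ∧ t.Nonempty ∧ m = eprod t f := by
  by_contra hc
  push_neg at hc
  have hm0 : m ≠ 0 := mem_supp_ne_zero hm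
  rw [mem_supp, join_expand, coeff_comb _ _ _ hm0] at hm
  apply hm
  refine Finset.sum_eq_zero (fun t ht => ?_)
  rw [Finset.mem_filter, Finset.mem_powerset] at ht
  rw [if_neg]
  intro h
  exact hc t ht.1 ht.2 h.symm

end IndRes
namespace IndRes

attribute [local instance] Classical.propDecidable

variable {E : Type} [SemilatticeWithZero E]

lemma one_sub_inr_rjoin {ι A : Type} [NonUnitalCommRing A] (s : Finset ι) (f : ι → A) :
    (1 : Unitization ℤ A) - Unitization.inr (rjoin s f)
      = ∏ i ∈ s, ((1 : Unitization ℤ A) - Unitization.inr (f i)) := by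
  have h1 : ∏ i ∈ s, ((1 : Unitization ℤ A) - Unitization.inr (f i))
      = ∏ i ∈ s, (-(Unitization.inr (f i)) + (1 : Unitization ℤ A)) := by
    refine Finset.prod_congr rfl (fun i _ => by ring)
  rw [h1, Finset.prod_add (fun i => -(Unitization.inr (f i) : Unitization ℤ A)) (fun _ => 1)]
  have h2 : ∀ t ∈ s.powerset,
      (∏ i ∈ t, -(Unitization.inr (f i) : Unitization ℤ A)) * ∏ _i ∈ s \ t, (1 : Unitization ℤ A)
        = (-1 : Unitization ℤ A) ^ t.card * ∏ i ∈ t, Unitization.inr (f i) := by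
    intro t _
    rw [Finset.prod_const_one, mul_one]
    have : ∀ i ∈ t, -(Unitization.inr (f i) : Unitization ℤ A)
        = (-1) * Unitization.inr (f i) := fun i _ => by ring
    rw [Finset.prod_congr rfl this, Finset.prod_mul_distrib, Finset.prod_const]
  rw [Finset.sum_congr rfl h2]
  rw [← Finset.sum_filter_add_sum_filter_not s.powerset (fun t => t.Nonempty)]
  have h3 : s.powerset.filter (fun t => ¬ t.Nonempty) = {∅} := by
    ext t
    simp [Finset.not_nonempty_iff_eq_empty, Finset.mem_powerset]
    intro h; subst h; exact Finset.empty_subset s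
  rw [h3, Finset.sum_singleton, Finset.card_empty, pow_zero, Finset.prod_empty, mul_one]
  have h4 : (Unitization.inr (rjoin s f) : Unitization ℤ A)
      = -∑ t ∈ s.powerset.filter (fun t => t.Nonempty),
          ((-1 : Unitization ℤ A) ^ t.card) * ∏ i ∈ t, Unitization.inr (f i) := by
    unfold rjoin
    have hmap : (Unitization.inr (∑ t ∈ s.powerset.filter (fun t => t.Nonempty),
        ((-1 : ℤ) ^ (t.card + 1)) • nprod t f) : Unitization ℤ A)
        = ∑ t ∈ s.powerset.filter (fun t => t.Nonempty),
            Unitization.inr (((-1 : ℤ) ^ (t.card + 1)) • nprod t f) :=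
      map_sum (AddMonoidHom.mk' (Unitization.inr : A → Unitization ℤ A)
        (Unitization.inr_add ℤ)) _ _
    rw [hmap, ← Finset.sum_neg_distrib]
    refine Finset.sum_congr rfl (fun t ht => ?_)
    have htne : t.Nonempty := (Finset.mem_filter.mp ht).2
    show Unitization.inr ((-1 : ℤ) ^ (t.card + 1) • nprod t f) = _
    have key : ∀ (n : ℕ) (y : Unitization ℤ A),
        (-1 : Unitization ℤ A) ^ n * y = ((-1 : ℤ) ^ n) • y := by
      intro n
      induction n with
      | zero => intro y; rw [pow_zero, pow_zero, one_mul, one_smul]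
      | succ k ih =>
        intro y
        rw [pow_succ (-1 : Unitization ℤ A) k, mul_assoc, neg_one_mul, ih, pow_succ (-1 : ℤ) k,
          mul_neg_one, neg_smul, smul_neg]
    rw [Unitization.inr_smul, prod_inr_eq htne f, key, pow_succ (-1 : ℤ), mul_neg_one, neg_smul]
  rw [h4]
  ring

lemma join_sq {ι : Type} (s : Finset ι) (f : ι → E) :
    (join s f : ZE E) * join s f = join s f := by
  apply inr_inj
  rw [Unitization.inr_mul]
  have hu : ∀ i ∈ s, ((1 : Unitization ℤ (ZE E)) - Unitization.inr (elt (f i)))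
      * ((1 : Unitization ℤ (ZE E)) - Unitization.inr (elt (f i)))
      = (1 : Unitization ℤ (ZE E)) - Unitization.inr (elt (f i)) := by
    intro i _
    have : (Unitization.inr (elt (f i)) : Unitization ℤ (ZE E))
        * Unitization.inr (elt (f i)) = Unitization.inr (elt (f i)) := by
      rw [← Unitization.inr_mul, ← elt_mul, idemE]
    calc ((1 : Unitization ℤ (ZE E)) - Unitization.inr (elt (f i)))
          * ((1 : Unitization ℤ (ZE E)) - Unitization.inr (elt (f i)))
        = 1 - Unitization.inr (elt (f i)) - Unitization.inr (elt (f i))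
            + Unitization.inr (elt (f i)) * Unitization.inr (elt (f i)) := by ring
      _ = _ := by rw [this]; ring
  have hq : (∏ i ∈ s, ((1 : Unitization ℤ (ZE E)) - Unitization.inr (elt (f i))))
      * (∏ i ∈ s, ((1 : Unitization ℤ (ZE E)) - Unitization.inr (elt (f i))))
      = ∏ i ∈ s, ((1 : Unitization ℤ (ZE E)) - Unitization.inr (elt (f i))) := by
    rw [← Finset.prod_mul_distrib]
    exact Finset.prod_congr rfl hu
  have hj : (Unitization.inr (join s f) : Unitization ℤ (ZE E))
      = 1 - ∏ i ∈ s, ((1 : Unitization ℤ (ZE E)) - Unitization.inr (elt (f i))) := by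
    rw [← one_sub_inr_rjoin s (fun i => elt (f i))]
    show _ = 1 - (1 - Unitization.inr (join s f))
    ring
  rw [hj]
  calc (1 - ∏ i ∈ s, ((1 : Unitization ℤ (ZE E)) - Unitization.inr (elt (f i))))
        * (1 - ∏ i ∈ s, ((1 : Unitization ℤ (ZE E)) - Unitization.inr (elt (f i))))
      = 1 - (∏ i ∈ s, ((1 : Unitization ℤ (ZE E)) - Unitization.inr (elt (f i))))
          - (∏ i ∈ s, ((1 : Unitization ℤ (ZE E)) - Unitization.inr (elt (f i))))
          + (∏ i ∈ s, ((1 : Unitization ℤ (ZE E)) - Unitization.inr (elt (f i))))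
            * (∏ i ∈ s, ((1 : Unitization ℤ (ZE E)) - Unitization.inr (elt (f i)))) := by ring
    _ = _ := by rw [hq]; ring

lemma join_absorb {ι : Type} {s : Finset ι} {f : ι → E} {e : E}
    (h : ∀ i ∈ s, f i * e = f i) : (join s f : ZE E) * elt e = join s f := by
  rw [join_expand, Finset.sum_mul]
  refine Finset.sum_congr rfl (fun t ht => ?_)
  have htne : t.Nonempty := (Finset.mem_filter.mp ht).2
  have hts : t ⊆ s := Finset.mem_powerset.mp (Finset.mem_filter.mp ht).1
  rw [smul_mul_assoc, ← elt_mul, eprod_absorb htne (fun i hi => h i (hts hi))]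

lemma exists_maximal_mul (X : Finset E) (hX : X.Nonempty) :
    ∃ m ∈ X, ∀ x ∈ X, m * x = m → x = m := by
  induction hX using Finset.Nonempty.cons_induction with
  | singleton a =>
      exact ⟨a, by simp, fun x hx _ => Finset.mem_singleton.mp hx⟩
  | cons a s ha hs ih =>
      obtain ⟨m, hm, hmax⟩ := ih
      by_cases hca : m * a = m
      · refine ⟨a, by simp, ?_⟩
        intro x hx hax
        rcases Finset.mem_cons.mp hx with rfl | hxs
        · rfl
        · have hmx : m * x = m := by
            rw [← hca, mul_assoc, hax, hca]
          have hx_eq : x = m := hmax x hxs hmx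
          have ham : a * m = a := by rw [← hx_eq]; exact hax
          rw [hx_eq, ← ham, mul_comm, hca]
      · refine ⟨m, Finset.mem_cons_of_mem hm, ?_⟩
        intro x hx hmx
        rcases Finset.mem_cons.mp hx with rfl | hxs
        · exact absurd hmx hca
        · exact hmax x hxs hmx

end IndRes
namespace IndRes

attribute [local instance] Classical.propDecidable

variable {E : Type} [SemilatticeWithZero E]

lemma eprod_reindex {ι κ : Type} {g : ι → κ} {u : Finset ι} {s : Finset κ}
    (hu : u.Nonempty) (hmem : ∀ i ∈ u, g i ∈ s)
    (hinj : ∀ a ∈ u, ∀ b ∈ u, g a = g b → a = b)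
    (hsur : ∀ x ∈ s, ∃ i ∈ u, g i = x) (f : κ → E) :
    eprod s f = eprod u (f ∘ g) := by
  have hs : s.Nonempty := by
    obtain ⟨i, hi⟩ := hu
    exact ⟨g i, hmem i hi⟩
  apply toW_inj
  rw [eprod_coe hs f, eprod_coe hu (f ∘ g)]
  exact (Finset.prod_nbij g hmem hinj hsur (fun i _ => rfl)).symm

/-- `Q u = eprod u δ` if `u` is nonempty, else `e`. -/
noncomputable def Qf {r : ℕ} (e : E) (δ : Fin r → E) (u : Finset (Fin r)) : E :=
  if u.Nonempty then eprod u δ else e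

lemma Qf_of_nonempty {r : ℕ} {e : E} {δ : Fin r → E} {u : Finset (Fin r)} (hu : u.Nonempty) :
    Qf e δ u = eprod u δ := if_pos hu

lemma Qf_empty {r : ℕ} {e : E} {δ : Fin r → E} : Qf e δ (∅ : Finset (Fin r)) = e :=
  if_neg (by simp)

section Chain

variable {ℛ : E → Set (Finset E)} {e : E} {r : ℕ} {Rs : Fin r → Finset E}

/-- Elements of the support of `⋁ R` for a cover `R` of `e` are nonzero and lie below `e`. -/
lemma supp_v_mem (hcov : CovSystem ℛ) (he : e ≠ 0) {R : Finset E} (hR : R ∈ ℛ e) {m : E}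
    (hm : m ∈ supp (join R (fun f => f) : ZE E)) : m ≠ 0 ∧ m * e = m := by
  obtain ⟨t, hts, htne, rfl⟩ := supp_join hm
  refine ⟨mem_supp_ne_zero hm, ?_⟩
  exact eprod_absorb htne (fun i hi => ((hcov e he R hR).1 i (hts hi)).2)

lemma chain_step (h2 : CondII ℛ) (he : e ≠ 0) (hinj : Function.Injective Rs)
    (hRs : ∀ i, Rs i ∈ ℛ e) (δ : Fin r → E) {s : Finset (Fin r)} {j : Fin r} (hj : j ∈ s)
    (hδ : ∀ i ∈ s, δ i ∈ supp (join (Rs i) (fun f => f) : ZE E))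
    (hne : Qf e δ (s.erase j) ≠ 0) :
    eprod s δ * Qf e δ (s.erase j) = eprod s δ ∧ eprod s δ ≠ Qf e δ (s.erase j) := by
  have hk : s.card = s.card := rfl
  set k := s.card with hkdef
  have hkpos : 0 < k := Finset.card_pos.mpr ⟨j, hj⟩
  let σ := s.orderIsoOfFin hkdef.symm
  let g : Fin k → Fin r := fun i => (σ i : Fin r)
  have hg : Function.Injective g := fun a b h => σ.injective (Subtype.ext h)
  let j' : Fin k := σ.symm ⟨j, hj⟩
  have hgj' : g j' = j := congrArg Subtype.val (σ.apply_symm_apply ⟨j, hj⟩)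
  have huniv_ne : (Finset.univ : Finset (Fin k)).Nonempty := ⟨j', Finset.mem_univ _⟩
  have heq1 : eprod s δ = eprod Finset.univ (δ ∘ g) :=
    eprod_reindex huniv_ne (fun i _ => (σ i).2)
      (fun a _ b _ h => hg h)
      (fun x hx => ⟨σ.symm ⟨x, hx⟩, Finset.mem_univ _,
        congrArg Subtype.val (σ.apply_symm_apply ⟨x, hx⟩)⟩) δ
  have heq2 : (if k = 1 then e else eprod (Finset.univ.erase j') (δ ∘ g))
      = Qf e δ (s.erase j) := by
    by_cases hk1 : k = 1
    · rw [if_pos hk1]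
      have hse : s.erase j = ∅ := by
        rw [← Finset.card_eq_zero, Finset.card_erase_of_mem hj]
        omega
      rw [hse, Qf_empty]
    · rw [if_neg hk1]
      have hne1 : (Finset.univ.erase j' : Finset (Fin k)).Nonempty := by
        rw [← Finset.card_pos, Finset.card_erase_of_mem (Finset.mem_univ _), Finset.card_univ,
          Fintype.card_fin]
        omega
      have hsne : (s.erase j).Nonempty := by
        rw [← Finset.card_pos, Finset.card_erase_of_mem hj]
        omega
      rw [Qf_of_nonempty hsne]
      refine (eprod_reindex hne1 ?_ ?_ ?_ δ).symm
      · intro i hi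
        refine Finset.mem_erase.mpr ⟨?_, (σ i).2⟩
        intro h
        exact (Finset.mem_erase.mp hi).1 (hg (h.trans hgj'.symm))
      · exact fun a _ b _ h => hg h
      · intro x hx
        obtain ⟨hxj, hxs⟩ := Finset.mem_erase.mp hx
        refine ⟨σ.symm ⟨x, hxs⟩, ?_, congrArg Subtype.val (σ.apply_symm_apply ⟨x, hxs⟩)⟩
        refine Finset.mem_erase.mpr ⟨?_, Finset.mem_univ _⟩
        intro h
        apply hxj
        have := congrArg (fun y => (σ y : Fin r)) h
        simpa [hgj'] using this.trans hgj'
  have hmain := h2 e he k hkpos (Rs ∘ g) (hinj.comp hg) (fun i => hRs (g i)) (δ ∘ g)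
    (fun i => hδ (g i) (σ i).2) j' (by rw [heq2]; exact hne)
  rw [← heq1] at hmain
  rw [heq2] at hmain
  exact hmain

lemma chain_aux (hcov : CovSystem ℛ) (h2 : CondII ℛ) (he : e ≠ 0)
    (hinj : Function.Injective Rs) (hRs : ∀ i, Rs i ∈ ℛ e) (δ : Fin r → E) :
    ∀ (n : ℕ) (s t : Finset (Fin r)), (s \ t).card = n → t ⊆ s → s.Nonempty →
    (∀ i ∈ s, δ i ∈ supp (join (Rs i) (fun f => f) : ZE E)) → eprod s δ ≠ 0 →
    eprod s δ * Qf e δ t = eprod s δ ∧ (t ≠ s → eprod s δ ≠ Qf e δ t) := by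
  intro n
  induction n with
  | zero =>
      intro s t hcard hts hsne hδ _
      have hst : s = t := Finset.Subset.antisymm
        (by rwa [← Finset.sdiff_eq_empty_iff_subset, ← Finset.card_eq_zero]) hts
      subst hst
      rw [Qf_of_nonempty hsne]
      exact ⟨by rw [idemE], fun h => absurd rfl h⟩
  | succ n ih =>
      intro s t hcard hts hsne hδ hs0
      have hsd : (s \ t).Nonempty := by rw [← Finset.card_pos, hcard]; omega
      obtain ⟨j, hj⟩ := hsd
      have hjs : j ∈ s := (Finset.mem_sdiff.mp hj).1
      have hjt : j ∉ t := (Finset.mem_sdiff.mp hj).2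
      have hts' : t ⊆ s.erase j := fun x hx =>
        Finset.mem_erase.mpr ⟨fun h => hjt (h ▸ hx), hts hx⟩
      have hfact : eprod s δ = δ j * Qf e δ (s.erase j) := by
        rcases (s.erase j).eq_empty_or_nonempty with h' | h'
        · have hsj : s = {j} := by
            refine Finset.eq_singleton_iff_unique_mem.mpr ⟨hjs, fun x hx => ?_⟩
            by_contra hxj
            have : x ∈ s.erase j := Finset.mem_erase.mpr ⟨hxj, hx⟩
            rw [h'] at this
            exact absurd this (Finset.notMem_empty x)
          rw [h', Qf_empty, hsj, eprod_singleton]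
          exact ((supp_v_mem hcov he (hRs j) (hδ j hjs)).2).symm
        · rw [Qf_of_nonempty h']
          exact eprod_erase hjs h' δ
      have hQs' : Qf e δ (s.erase j) ≠ 0 := by
        intro h
        rw [hfact, h, zeroE'] at hs0
        exact hs0 rfl
      have hstep := chain_step h2 he hinj hRs δ hjs hδ hQs'
      rcases (s.erase j).eq_empty_or_nonempty with h' | h'
      · have ht0 : t = ∅ := Finset.subset_empty.mp (h' ▸ hts')
        rw [ht0, ← h']
        exact ⟨hstep.1, fun _ => hstep.2⟩
      · have hδ' : ∀ i ∈ s.erase j, δ i ∈ supp (join (Rs i) (fun f => f) : ZE E) :=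
          fun i hi => hδ i (Finset.erase_subset j s hi)
        have hs'0 : eprod (s.erase j) δ ≠ 0 := by rw [← Qf_of_nonempty h']; exact hQs'
        have hsd_eq : (s.erase j) \ t = (s \ t).erase j := by
          ext x
          simp only [Finset.mem_sdiff, Finset.mem_erase]
          tauto
        have hcard' : ((s.erase j) \ t).card = n := by
          rw [hsd_eq, Finset.card_erase_of_mem hj, hcard]
          omega
        obtain ⟨ih1, _⟩ := ih (s.erase j) t hcard' hts' h' hδ' hs'0
        rw [Qf_of_nonempty h'] at hstep
        constructor
        · calc eprod s δ * Qf e δ t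
              = (eprod s δ * eprod (s.erase j) δ) * Qf e δ t := by rw [hstep.1]
            _ = eprod s δ * (eprod (s.erase j) δ * Qf e δ t) := by rw [mul_assoc]
            _ = eprod s δ * eprod (s.erase j) δ := by rw [ih1]
            _ = eprod s δ := hstep.1
        · intro _ hEq
          refine hstep.2 ?_
          calc eprod s δ = eprod s δ * eprod (s.erase j) δ := hstep.1.symm
            _ = eprod (s.erase j) δ * eprod s δ := mul_comm _ _
            _ = eprod (s.erase j) δ * Qf e δ t := by rw [hEq]
            _ = eprod (s.erase j) δ := ih1

lemma chain (hcov : CovSystem ℛ) (h2 : CondII ℛ) (he : e ≠ 0)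
    (hinj : Function.Injective Rs) (hRs : ∀ i, Rs i ∈ ℛ e) (δ : Fin r → E)
    {s t : Finset (Fin r)} (hts : t ⊆ s) (hsne : s.Nonempty)
    (hδ : ∀ i ∈ s, δ i ∈ supp (join (Rs i) (fun f => f) : ZE E)) (hs0 : eprod s δ ≠ 0) :
    eprod s δ * Qf e δ t = eprod s δ ∧ (t ≠ s → eprod s δ ≠ Qf e δ t) :=
  chain_aux hcov h2 he hinj hRs δ (s \ t).card s t rfl hts hsne hδ hs0

end Chain

end IndRes
namespace IndRes

attribute [local instance] Classical.propDecidable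

variable {E : Type} [SemilatticeWithZero E]

lemma coeff_of_not_mem_supp {x : ZE E} {m : E} (h : m ∉ supp x) :
    (x : MonoidAlgebra ℤ E).coeff m = 0 := Finsupp.notMem_support_iff.mp h

lemma supp_elt_sub {a m : E} (h : m ∈ supp (elt a : ZE E)) : m = a := by
  have hm : m ≠ 0 := mem_supp_ne_zero h
  rw [mem_supp, elt_apply a hm] at h
  by_contra hc
  rw [if_neg (fun hh => hc hh.symm)] at h
  exact h rfl

lemma eq_zero_of_supp_empty {x : ZE E} (h : ∀ m, m ∉ supp x) : x = 0 := by
  apply Subtype.ext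
  ext m
  rw [coeff_of_not_mem_supp (h m), ZE.val_zero']
  rfl

lemma mem_supp_sub {x y : ZE E} {m : E} (h : m ∈ supp (x - y)) :
    m ∈ supp x ∨ m ∈ supp y := by
  by_contra hc
  push_neg at hc
  rw [mem_supp, ZE.val_sub', MonoidAlgebra.coeff_sub, Finsupp.sub_apply, coeff_of_not_mem_supp hc.1,
    coeff_of_not_mem_supp hc.2, sub_zero] at h
  exact h rfl

lemma mem_supp_add {x y : ZE E} {m : E} (h : m ∈ supp (x + y)) :
    m ∈ supp x ∨ m ∈ supp y := by
  by_contra hc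
  push_neg at hc
  rw [mem_supp, ZE.val_add', MonoidAlgebra.coeff_add, Finsupp.add_apply, coeff_of_not_mem_supp hc.1,
    coeff_of_not_mem_supp hc.2, add_zero] at h
  exact h rfl

section Expand

variable {ℛ : E → Set (Finset E)} {e : E} {r : ℕ} {Rs : Fin r → Finset E}

lemma prod_expand (hcov : CovSystem ℛ) (he : e ≠ 0) (hRs : ∀ i, Rs i ∈ ℛ e)
    (ε : Fin r → ZE E) (B : Finset (Fin r))
    (hB : ∀ i ∈ B, ε i = elt e - join (Rs i) (fun f => f)) :
    ∃ z : ZE E,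
      (if B.Nonempty then nprod B ε else elt e) = elt e + z ∧
      (if B.Nonempty then nprod B ε else elt e) * elt e
        = (if B.Nonempty then nprod B ε else elt e) ∧
      ∀ m ∈ supp z, ∃ C, C ⊆ B ∧ C.Nonempty ∧ ∃ δ : Fin r → E,
        (∀ i ∈ C, δ i ∈ supp (join (Rs i) (fun f => f) : ZE E)) ∧ m = eprod C δ := by
  have heabsorb : ∀ i : Fin r, (join (Rs i) (fun f => f) : ZE E) * elt e
      = join (Rs i) (fun f => f) :=
    fun i => join_absorb (fun f hf => ((hcov e he (Rs i) (hRs i)).1 f hf).2)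
  induction B using Finset.induction_on with
  | empty =>
      refine ⟨0, by rw [if_neg (by simp), add_zero], ?_, ?_⟩
      · rw [if_neg (by simp), ← elt_mul, idemE]
      · intro m hm
        rw [mem_supp, ZE.val_zero'] at hm
        exact absurd rfl hm
  | @insert a B ha ih =>
      obtain ⟨z, hzeq, habs, hzsupp⟩ := ih (fun i hi => hB i (Finset.mem_insert_of_mem hi))
      have hBa : ε a = elt e - join (Rs a) (fun f => f) := hB a (Finset.mem_insert_self a B)
      set va : ZE E := join (Rs a) (fun f => f) with hva
      set N : ZE E := if B.Nonempty then nprod B ε else elt e with hN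
      have hstep : nprod (insert a B) ε = ε a * N := by
        rcases B.eq_empty_or_nonempty with hBe | hBne
        · subst hBe
          rw [hN, if_neg (by simp), Finset.insert_empty, nprod_singleton, hBa]
          rw [sub_mul, ← elt_mul, idemE, heabsorb a]
        · rw [hN, if_pos hBne, nprod_insert ha hBne]
      have hez : elt e * z = z := by
        have : elt e * N = N := by rw [mul_comm]; exact habs
        have h2 : elt e * (elt e + z) = elt e + z := by rw [← hzeq]; exact this
        rw [mul_add, ← elt_mul, idemE] at h2
        exact add_left_cancel h2
      have hexp : nprod (insert a B) ε = elt e + (z - (va + va * z)) := by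
        rw [hstep, hBa, hzeq, sub_mul, mul_add, mul_add, ← elt_mul, idemE, hez,
          heabsorb a]
        abel
      refine ⟨z - (va + va * z), by rw [if_pos (Finset.insert_nonempty a B)]; exact hexp,
        ?_, ?_⟩
      · rw [if_pos (Finset.insert_nonempty a B), hstep, mul_assoc, habs]
      · intro m hm
        rcases mem_supp_sub hm with hm1 | hm2
        · obtain ⟨C, hCB, hCne, δ, hδ, hmeq⟩ := hzsupp m hm1
          exact ⟨C, hCB.trans (Finset.subset_insert a B), hCne, δ, hδ, hmeq⟩
        · rcases mem_supp_add hm2 with hm3 | hm4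
          · refine ⟨{a}, by simp, Finset.singleton_nonempty a, fun _ => m, ?_, ?_⟩
            · intro i hi
              rw [Finset.mem_singleton] at hi
              subst hi
              exact hm3
            · rw [eprod_singleton]
          · obtain ⟨b, hb, c, hc, hmeq⟩ := supp_mul hm4
            obtain ⟨C, hCB, hCne, δ, hδ, hceq⟩ := hzsupp c hc
            have haC : a ∉ C := fun h => ha (hCB h)
            refine ⟨insert a C, Finset.insert_subset_insert a hCB,
              Finset.insert_nonempty a C, fun i => if i = a then b else δ i, ?_, ?_⟩
            · intro i hi
              rcases Finset.mem_insert.mp hi with rfl | hiC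
              · show (if i = i then b else δ i) ∈ _
                rw [if_pos rfl]; exact hb
              · show (if i = a then b else δ i) ∈ _
                rw [if_neg (fun h : i = a => haC (h ▸ hiC))]
                exact hδ i hiC
            · rw [eprod_insert haC hCne]
              show m = (if a = a then b else δ a) * _
              rw [if_pos rfl, hmeq, hceq]
              congr 1
              refine eprod_congr (fun i hi => ?_)
              show δ i = (if i = a then b else δ i)
              exact (if_neg (fun h : i = a => haC (h ▸ hi))).symm

end Expand

end IndRes
namespace IndRes

attribute [local instance] Classical.propDecidable

variable {E : Type} [SemilatticeWithZero E]

lemma elt_mul_join (d : E) {ι : Type} (R : Finset ι) (f : ι → E) :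
    (elt d : ZE E) * join R f = ∑ t ∈ R.powerset.filter (fun t => t.Nonempty),
      ((-1 : ℤ) ^ (t.card + 1)) • elt (d * eprod t f) := by
  rw [join_expand, Finset.mul_sum]
  refine Finset.sum_congr rfl (fun t _ => ?_)
  rw [mul_smul_comm, ← elt_mul]

lemma alt_sum_one {α : Type} {F : Finset α} (hF : F.Nonempty) :
    (∑ t ∈ F.powerset.filter (fun t => t.Nonempty), (-1 : ℤ) ^ (t.card + 1)) = 1 := by
  have h0 : (∑ t ∈ F.powerset, (-1 : ℤ) ^ t.card) = 0 :=
    Finset.sum_powerset_neg_one_pow_card_of_nonempty hF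
  rw [← Finset.sum_filter_add_sum_filter_not F.powerset (fun t => t.Nonempty)
    (fun t => (-1 : ℤ) ^ t.card)] at h0
  have hempt : F.powerset.filter (fun t => ¬ t.Nonempty) = {∅} := by
    ext t
    simp only [Finset.mem_filter, Finset.mem_powerset, Finset.not_nonempty_iff_eq_empty,
      Finset.mem_singleton]
    constructor
    · exact fun h => h.2
    · intro h; subst h; exact ⟨Finset.empty_subset F, rfl⟩
  rw [hempt, Finset.sum_singleton, Finset.card_empty, pow_zero] at h0
  have hsum : (∑ t ∈ F.powerset.filter (fun t => t.Nonempty), (-1 : ℤ) ^ t.card) = -1 := by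
    linarith
  calc (∑ t ∈ F.powerset.filter (fun t => t.Nonempty), (-1 : ℤ) ^ (t.card + 1))
      = ∑ t ∈ F.powerset.filter (fun t => t.Nonempty), (-1) * (-1 : ℤ) ^ t.card := by
        refine Finset.sum_congr rfl (fun t _ => ?_)
        rw [pow_succ]
        ring
    _ = (-1) * ∑ t ∈ F.powerset.filter (fun t => t.Nonempty), (-1 : ℤ) ^ t.card := by
        rw [Finset.mul_sum]
    _ = 1 := by rw [hsum]; ring

end IndRes
theorem statement_11 {E Γ : Type} [SemilatticeWithZero E] [Group Γ] [MulAction Γ E]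
    (hact : IsGammaSL Γ E) (ℛ : E → Set (Finset E))
    (hcov : CovSystem ℛ) (h1 : CondI ℛ) (h2 : CondII ℛ) (h3 : CondIII Γ ℛ) :
    ∀ e : E, e ≠ 0 → ∀ r : ℕ, 0 < r → ∀ Rs : Fin r → Finset E, Function.Injective Rs →
    (∀ i, Rs i ∈ ℛ e) → ∀ ε : Fin r → ZE E,
    (∀ i, (∃ d ∈ supp (join (Rs i) (fun f => f)), ε i = elt d) ∨
          ε i = elt e - join (Rs i) (fun f => f)) →
    ∀ j : Fin r,
      (if r = 1 then elt e else nprod (Finset.univ.erase j) ε) ≠ 0 →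
      nprod Finset.univ ε * (if r = 1 then elt e else nprod (Finset.univ.erase j) ε)
          = nprod Finset.univ ε ∧
      nprod Finset.univ ε ≠ (if r = 1 then elt e else nprod (Finset.univ.erase j) ε) := by
  classical
  intro e he r hr Rs hinj hRs ε hch j hne
  set v : Fin r → ZE E := fun i => join (Rs i) (fun f => f) with hv
  set X : ZE E := if r = 1 then elt e else nprod (Finset.univ.erase j) ε with hX
  set A : Finset (Fin r) :=
    Finset.univ.filter (fun i => ∃ d, d ∈ supp (v i) ∧ ε i = elt d) with hA
  set dd : Fin r → E :=
    fun i => if h : ∃ d, d ∈ supp (v i) ∧ ε i = elt d then h.choose else e with hdd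
  have hddA : ∀ i ∈ A, dd i ∈ supp (v i) ∧ ε i = elt (dd i) := by
    intro i hi
    have h := (Finset.mem_filter.mp hi).2
    have hdi : dd i = h.choose := by simp only [hdd]; rw [dif_pos h]
    rw [hdi]
    exact h.choose_spec
  have hBnotA : ∀ i, i ∉ A → ε i = elt e - v i := by
    intro i hi
    rcases hch i with ⟨d, hd, hεi⟩ | h
    · exact absurd (Finset.mem_filter.mpr ⟨Finset.mem_univ i, ⟨d, hd, hεi⟩⟩) hi
    · exact h
  have he2 : (elt e : ZE E) * elt e = elt e := by rw [← elt_mul, idemE]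
  have heabs : ∀ i, (v i : ZE E) * elt e = v i :=
    fun i => join_absorb (fun f hf => ((hcov e he (Rs i) (hRs i)).1 f hf).2)
  have hveps : ∀ i, ε i * elt e = ε i := by
    intro i
    by_cases hiA : i ∈ A
    · obtain ⟨hd, hεi⟩ := hddA i hiA
      rw [hεi, ← elt_mul, (supp_v_mem hcov he (hRs i) hd).2]
    · rw [hBnotA i hiA, sub_mul, he2, heabs i]
  have hidem : ∀ i, ε i * ε i = ε i := by
    intro i
    by_cases hiA : i ∈ A
    · obtain ⟨hd, hεi⟩ := hddA i hiA
      rw [hεi, ← elt_mul, idemE]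
    · rw [hBnotA i hiA]
      have hev : (elt e : ZE E) * v i = v i := by rw [mul_comm]; exact heabs i
      rw [sub_mul, mul_sub, mul_sub, he2, hev, heabs i, join_sq]
      abel
  have huniv1 : r = 1 → (Finset.univ : Finset (Fin r)) = {j} := by
    intro hr1
    refine Finset.eq_singleton_iff_unique_mem.mpr ⟨Finset.mem_univ j, fun x _ => ?_⟩
    exact Fin.ext (by omega)
  have hIne : r ≠ 1 → (Finset.univ.erase j).Nonempty := by
    intro hr1
    rw [← Finset.card_pos, Finset.card_erase_of_mem (Finset.mem_univ j), Finset.card_univ,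
      Fintype.card_fin]
    omega
  have hXe : X * elt e = X := by
    rw [hX]
    by_cases hr1 : r = 1
    · rw [if_pos hr1]; exact he2
    · rw [if_neg hr1]; exact nprod_absorb (hIne hr1) (fun i _ => hveps i)
  have hXX : X * X = X := by
    rw [hX]
    by_cases hr1 : r = 1
    · rw [if_pos hr1]; exact he2
    · rw [if_neg hr1]; exact nprod_idem (hIne hr1) (fun i _ => hidem i)
  have hfull : nprod Finset.univ ε = ε j * X := by
    rw [hX]
    by_cases hr1 : r = 1
    · rw [if_pos hr1, hveps j, huniv1 hr1, nprod_singleton]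
    · rw [if_neg hr1]
      conv_lhs => rw [← Finset.insert_erase (Finset.mem_univ j)]
      exact nprod_insert (Finset.notMem_erase j _) (hIne hr1) ε
  have claim1 : nprod Finset.univ ε * X = nprod Finset.univ ε := by
    rw [hfull, mul_assoc, hXX]
  refine ⟨claim1, ?_⟩
  intro hEq
  -- split the remaining indices by type
  set A' : Finset (Fin r) := (Finset.univ.erase j).filter (fun i => i ∈ A) with hA'
  set B' : Finset (Fin r) := (Finset.univ.erase j).filter (fun i => i ∉ A) with hB'
  have hdisj : Disjoint A' B' := Finset.disjoint_left.mpr (fun i hiA hiB =>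
    (Finset.mem_filter.mp hiB).2 (Finset.mem_filter.mp hiA).2)
  have hunion : A' ∪ B' = Finset.univ.erase j := Finset.filter_union_filter_not_eq _ _
  have hjA' : j ∉ A' := fun h => (Finset.notMem_erase j _) (Finset.mem_filter.mp h).1
  have hjB' : j ∉ B' := fun h => (Finset.notMem_erase j _) (Finset.mem_filter.mp h).1
  have hddsupp : ∀ i ∈ A', dd i ∈ supp (v i) :=
    fun i hi => (hddA i (Finset.mem_filter.mp hi).2).1
  have hdde : ∀ i ∈ A', dd i * e = dd i :=
    fun i hi => (supp_v_mem hcov he (hRs i) (hddsupp i hi)).2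
  set D : E := if A'.Nonempty then eprod A' dd else e with hD
  have hDe : D * e = D := by
    rw [hD]
    by_cases h : A'.Nonempty
    · rw [if_pos h]; exact eprod_absorb h hdde
    · rw [if_neg h]; exact idemE e
  obtain ⟨z0, hz0eq, hz0abs, hz0supp⟩ := prod_expand hcov he hRs ε B'
    (fun i hi => hBnotA i (Finset.mem_filter.mp hi).2)
  -- X = elt D + z
  have hXfact : ∃ z : ZE E, X = elt D + z ∧ ∀ m ∈ supp z, ∃ C, C ⊆ B' ∧ C.Nonempty ∧
      ∃ δ : Fin r → E, (∀ i ∈ C, δ i ∈ supp (v i)) ∧ m = D * eprod C δ := by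
    by_cases hr1 : r = 1
    · have hIe : Finset.univ.erase j = ∅ := by rw [huniv1 hr1, Finset.erase_singleton]
      have hA'e : A' = ∅ := Finset.subset_empty.mp (hIe ▸ Finset.filter_subset _ _)
      have hDe' : D = e := by rw [hD, hA'e, if_neg (by simp)]
      refine ⟨0, ?_, ?_⟩
      · rw [hX, if_pos hr1, hDe', add_zero]
      · intro m hm
        rw [mem_supp, ZE.val_zero'] at hm
        exact absurd rfl hm
    · by_cases hA'ne : A'.Nonempty
      · have hXsplit : X = nprod A' ε * (if B'.Nonempty then nprod B' ε else elt e) := by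
          by_cases hB'ne : B'.Nonempty
          · rw [if_pos hB'ne, hX, if_neg hr1, ← hunion, nprod_union hdisj hA'ne hB'ne]
          · have hA'I : A' = Finset.univ.erase j := by
              rw [← hunion, Finset.not_nonempty_iff_eq_empty.mp hB'ne, Finset.union_empty]
            rw [if_neg hB'ne, hX, if_neg hr1, ← hA'I]
            exact (nprod_absorb hA'ne (fun i _ => hveps i)).symm
        have hnA' : nprod A' ε = elt D := by
          rw [hD, if_pos hA'ne, elt_eprod hA'ne dd]
          exact nprod_congr (fun i hi => (hddA i ((Finset.mem_filter.mp hi).2)).2)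
        refine ⟨elt D * z0, ?_, ?_⟩
        · rw [hXsplit, hnA', hz0eq, mul_add, ← elt_mul, hDe]
        · intro m hm
          obtain ⟨b, hb, c, hc, hmeq⟩ := supp_mul hm
          have hbD : b = D := supp_elt_sub hb
          obtain ⟨C, hCB, hCne, δ, hδ, hceq⟩ := hz0supp c hc
          exact ⟨C, hCB, hCne, δ, hδ, by rw [hmeq, hbD, hceq]⟩
      · have hA'e := Finset.not_nonempty_iff_eq_empty.mp hA'ne
        have hB'I : B' = Finset.univ.erase j := by
          rw [← hunion, hA'e, Finset.empty_union]
        have hDe' : D = e := by rw [hD, if_neg hA'ne]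
        have hB'ne : B'.Nonempty := by rw [hB'I]; exact hIne hr1
        rw [if_pos hB'ne] at hz0eq
        refine ⟨z0, ?_, ?_⟩
        · rw [hX, if_neg hr1, ← hB'I, hDe']
          exact hz0eq
        · intro m hm
          obtain ⟨C, hCB, hCne, δ, hδ, hceq⟩ := hz0supp m hm
          refine ⟨C, hCB, hCne, δ, hδ, ?_⟩
          rw [hDe', hceq, mul_comm]
          exact (eprod_absorb hCne
            (fun i hi => (supp_v_mem hcov he (hRs i) (hδ i hi)).2)).symm
  obtain ⟨z, hXz, hzsupp⟩ := hXfact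
  have hD0 : D ≠ 0 := by
    intro h0
    apply hne
    have hz0' : z = 0 := eq_zero_of_supp_empty (fun m hm => by
      obtain ⟨C, _, _, δ, _, hmeq⟩ := hzsupp m hm
      exact absurd (by rw [hmeq, h0, zeroE]) (mem_supp_ne_zero hm))
    rw [hXz, hz0', h0, elt_zero, add_zero]
  -- strictness from the chain lemma
  have hstrict1 : ∀ C : Finset (Fin r), C ⊆ B' → C.Nonempty → ∀ δ : Fin r → E,
      (∀ i ∈ C, δ i ∈ supp (v i)) → D * eprod C δ ≠ 0 → D * eprod C δ ≠ D := by
    intro C hCB hCne δ hδ hm0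
    set δ' : Fin r → E := fun i => if i ∈ C then δ i else dd i with hδ'
    have hA'C : Disjoint A' C := Finset.disjoint_left.mpr
      (fun i hi h => (Finset.disjoint_left.mp hdisj hi) (hCB h))
    have hδ'C : ∀ i ∈ C, δ' i = δ i := by
      intro i hi
      simp only [hδ']
      rw [if_pos hi]
    have hδ'A : ∀ i ∈ A', δ' i = dd i := by
      intro i hi
      simp only [hδ']
      rw [if_neg (fun h => (Finset.disjoint_left.mp hA'C hi) h)]
    have hsA : eprod (A' ∪ C) δ' = D * eprod C δ := by
      by_cases hA'ne : A'.Nonempty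
      · rw [eprod_union hA'C hA'ne hCne, hD, if_pos hA'ne]
        congr 1
        · exact eprod_congr hδ'A
        · exact eprod_congr hδ'C
      · rw [Finset.not_nonempty_iff_eq_empty.mp hA'ne, Finset.empty_union, hD, if_neg hA'ne,
          eprod_congr hδ'C, mul_comm]
        exact (eprod_absorb hCne
          (fun i hi => (supp_v_mem hcov he (hRs i) (hδ i hi)).2)).symm
    have hQA' : Qf e δ' A' = D := by
      by_cases hA'ne : A'.Nonempty
      · rw [Qf_of_nonempty hA'ne, hD, if_pos hA'ne]; exact eprod_congr hδ'A
      · rw [Finset.not_nonempty_iff_eq_empty.mp hA'ne, Qf_empty, hD, if_neg hA'ne]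
    have hδ's : ∀ i ∈ A' ∪ C, δ' i ∈ supp (join (Rs i) (fun f => f) : ZE E) := by
      intro i hi
      rcases Finset.mem_union.mp hi with h | h
      · rw [hδ'A i h]; exact hddsupp i h
      · rw [hδ'C i h]; exact hδ i h
    have hchain := chain hcov h2 he hinj hRs δ' Finset.subset_union_left
      (hCne.mono Finset.subset_union_right) hδ's (by rw [hsA]; exact hm0)
    have hts : A' ≠ A' ∪ C := by
      obtain ⟨c, hc⟩ := hCne
      intro h
      exact (Finset.disjoint_left.mp hA'C (h ▸ Finset.mem_union_right A' hc)) hc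
    have := hchain.2 hts
    rw [hsA, hQA'] at this
    exact this
  have hstrictJ : ∀ w : E, w ∈ supp (v j) → ∀ C : Finset (Fin r), C ⊆ B' →
      ∀ δ : Fin r → E, (∀ i ∈ C, δ i ∈ supp (v i)) →
      ∀ m : E, m = (if C.Nonempty then w * (D * eprod C δ) else w * D) → m ≠ 0 →
      m * D = m ∧ m ≠ D ∧ (C.Nonempty → m ≠ w * D) := by
    intro w hw C hCB δ hδC m hm hm0
    have hwe : w * e = w := (supp_v_mem hcov he (hRs j) hw).2
    set δ' : Fin r → E := fun i => if i = j then w else if i ∈ C then δ i else dd i with hδ'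
    have hjC : j ∉ C := fun h => hjB' (hCB h)
    have hjAC : j ∉ A' ∪ C := by
      rw [Finset.mem_union]
      rintro (h | h)
      · exact hjA' h
      · exact hjC h
    have hA'C : Disjoint A' C := Finset.disjoint_left.mpr
      (fun i hi h => (Finset.disjoint_left.mp hdisj hi) (hCB h))
    have hδ'j : δ' j = w := by rw [hδ']; simp
    have hδ'C : ∀ i ∈ C, δ' i = δ i := by
      intro i hi
      simp only [hδ']
      rw [if_neg (fun h : i = j => hjC (h ▸ hi)), if_pos hi]
    have hδ'A : ∀ i ∈ A', δ' i = dd i := by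
      intro i hi
      simp only [hδ']
      rw [if_neg (fun h : i = j => hjA' (h ▸ hi)),
        if_neg (fun h => (Finset.disjoint_left.mp hA'C hi) h)]
    have hQA' : Qf e δ' A' = D := by
      by_cases hA'ne : A'.Nonempty
      · rw [Qf_of_nonempty hA'ne, hD, if_pos hA'ne]; exact eprod_congr hδ'A
      · rw [Finset.not_nonempty_iff_eq_empty.mp hA'ne, Qf_empty, hD, if_neg hA'ne]
    have hACval : (A' ∪ C).Nonempty →
        eprod (A' ∪ C) δ' = (if C.Nonempty then D * eprod C δ else D) := by
      intro hne'
      by_cases hCne : C.Nonempty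
      · rw [if_pos hCne]
        by_cases hA'ne : A'.Nonempty
        · rw [eprod_union hA'C hA'ne hCne, hD, if_pos hA'ne]
          congr 1
          · exact eprod_congr hδ'A
          · exact eprod_congr hδ'C
        · rw [Finset.not_nonempty_iff_eq_empty.mp hA'ne, Finset.empty_union, hD,
            if_neg hA'ne, eprod_congr hδ'C, mul_comm]
          exact (eprod_absorb hCne
            (fun i hi => (supp_v_mem hcov he (hRs i) (hδC i hi)).2)).symm
      · rw [if_neg hCne]
        have hA'ne : A'.Nonempty := by
          obtain ⟨x, hx⟩ := hne'
          rcases Finset.mem_union.mp hx with h | h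
          · exact ⟨x, h⟩
          · exact absurd ⟨x, h⟩ hCne
        rw [Finset.not_nonempty_iff_eq_empty.mp hCne, Finset.union_empty, hD, if_pos hA'ne]
        exact eprod_congr hδ'A
    have hsval : eprod (insert j (A' ∪ C)) δ' = m := by
      by_cases hACne : (A' ∪ C).Nonempty
      · rw [eprod_insert hjAC hACne, hδ'j, hACval hACne, hm]
        by_cases hCne : C.Nonempty
        · rw [if_pos hCne, if_pos hCne]
        · rw [if_neg hCne, if_neg hCne]
      · have hACe := Finset.not_nonempty_iff_eq_empty.mp hACne
        have hCne : ¬ C.Nonempty := fun h => hACne (h.mono Finset.subset_union_right)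
        have hA'ne : ¬ A'.Nonempty := fun h => hACne (h.mono Finset.subset_union_left)
        have hDe' : D = e := by rw [hD, if_neg hA'ne]
        rw [hACe, Finset.insert_empty, eprod_singleton, hδ'j, hm, if_neg hCne, hDe', hwe]
    have hδ's : ∀ i ∈ insert j (A' ∪ C), δ' i ∈ supp (join (Rs i) (fun f => f) : ZE E) := by
      intro i hi
      rcases Finset.mem_insert.mp hi with rfl | hi'
      · rw [hδ'j]; exact hw
      · rcases Finset.mem_union.mp hi' with h | h
        · rw [hδ'A i h]; exact hddsupp i h
        · rw [hδ'C i h]; exact hδC i h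
    have hs0 : eprod (insert j (A' ∪ C)) δ' ≠ 0 := by rw [hsval]; exact hm0
    have hsub1 : A' ⊆ insert j (A' ∪ C) :=
      Finset.Subset.trans Finset.subset_union_left (Finset.subset_insert _ _)
    have hch1 := chain hcov h2 he hinj hRs δ' hsub1 (Finset.insert_nonempty _ _) hδ's hs0
    have hneq1 : A' ≠ insert j (A' ∪ C) := by
      intro h
      exact hjA' (h ▸ Finset.mem_insert_self j _)
    refine ⟨?_, ?_, ?_⟩
    · have := hch1.1
      rw [hsval, hQA'] at this
      exact this
    · have := hch1.2 hneq1
      rw [hsval, hQA'] at this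
      exact this
    · intro hCne
      have hQins : Qf e δ' (insert j A') = w * D := by
        rw [Qf_of_nonempty (Finset.insert_nonempty j A')]
        by_cases hA'ne : A'.Nonempty
        · rw [eprod_insert hjA' hA'ne, hδ'j, hD, if_pos hA'ne, eprod_congr hδ'A]
        · rw [Finset.not_nonempty_iff_eq_empty.mp hA'ne, Finset.insert_empty,
            eprod_singleton, hδ'j, hD, if_neg hA'ne, hwe]
      have hsub2 : insert j A' ⊆ insert j (A' ∪ C) :=
        Finset.insert_subset_insert _ Finset.subset_union_left
      have hneq2 : insert j A' ≠ insert j (A' ∪ C) := by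
        obtain ⟨c, hc⟩ := hCne
        intro h
        have hcmem : c ∈ insert j (A' ∪ C) :=
          Finset.mem_insert_of_mem (Finset.mem_union_right _ hc)
        rw [← h] at hcmem
        rcases Finset.mem_insert.mp hcmem with rfl | hcA'
        · exact hjC hc
        · exact (Finset.disjoint_left.mp hA'C hcA') hc
      have hch2 := chain hcov h2 he hinj hRs δ' hsub2 (Finset.insert_nonempty _ _) hδ's hs0
      have := hch2.2 hneq2
      rw [hsval, hQins] at this
      exact this
  -- now distinguish the two cases for ε j
  by_cases hjA : j ∈ A
  · -- ε j = elt (dd j)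
    obtain ⟨hdj, hεj⟩ := hddA j hjA
    have hXD : (X : MonoidAlgebra ℤ E).coeff D = 1 := by
      rw [hXz, ZE.val_add', MonoidAlgebra.coeff_add, Finsupp.add_apply, elt_apply D hD0, if_pos rfl]
      have hzD : (z : MonoidAlgebra ℤ E).coeff D = 0 := by
        apply coeff_of_not_mem_supp
        intro hDsupp
        obtain ⟨C, hCB, hCne, δ, hδ, hmeq⟩ := hzsupp D hDsupp
        exact (hstrict1 C hCB hCne δ hδ (by rw [← hmeq]; exact hD0)) hmeq.symm
      rw [hzD, add_zero]
    have hED : ((nprod Finset.univ ε : ZE E) : MonoidAlgebra ℤ E).coeff D = 0 := by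
      have hfull2 : nprod Finset.univ ε = elt (dd j) * X := by rw [hfull, hεj]
      apply coeff_of_not_mem_supp
      intro hmem
      rw [hfull2] at hmem
      obtain ⟨b, hb, c, hc, hDeq⟩ := supp_mul hmem
      have hbd : b = dd j := supp_elt_sub hb
      rw [hXz] at hc
      rcases mem_supp_add hc with hc1 | hc2
      · have hcD : c = D := supp_elt_sub hc1
        have hform : D = (if (∅ : Finset (Fin r)).Nonempty
            then dd j * (D * eprod (∅ : Finset (Fin r)) (fun _ : Fin r => e)) else dd j * D) := by
          rw [if_neg (by simp)]
          conv_rhs => rw [← hbd, ← hcD]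
          exact hDeq
        have := hstrictJ (dd j) hdj ∅ (Finset.empty_subset _) (fun _ : Fin r => e)
          (fun i hi => absurd hi (Finset.notMem_empty i)) D hform hD0
        exact this.2.1 rfl
      · obtain ⟨C, hCB, hCne, δ, hδ, hceq⟩ := hzsupp c hc2
        have hform : D = (if C.Nonempty then dd j * (D * eprod C δ) else dd j * D) := by
          rw [if_pos hCne, ← hbd, ← hceq]
          exact hDeq
        have := hstrictJ (dd j) hdj C hCB δ hδ D hform hD0
        exact this.2.1 rfl
    rw [hEq] at hED
    rw [hED] at hXD
    exact zero_ne_one hXD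
  · -- ε j = elt e - v j
    have hεj : ε j = elt e - v j := hBnotA j hjA
    have hvjX : v j * X = 0 := by
      have hfull3 : nprod Finset.univ ε = X - v j * X := by
        rw [hfull, hεj, sub_mul]
        refine congrArg (· - v j * X) ?_
        rw [mul_comm]
        exact hXe
      rw [hEq] at hfull3
      exact sub_eq_self.mp hfull3.symm
    obtain ⟨f0, hf0R, hf0⟩ := (hcov e he (Rs j) (hRs j)).2 D hD0 hDe
    set XS : Finset E := (((Rs j).powerset.filter (fun t => t.Nonempty)).image
      (fun t => D * eprod t (fun f => f))).filter (fun x => x ≠ 0) with hXS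
    have hXSne : XS.Nonempty := by
      refine ⟨D * f0, Finset.mem_filter.mpr ⟨Finset.mem_image.mpr ⟨{f0}, ?_, ?_⟩, hf0⟩⟩
      · exact Finset.mem_filter.mpr ⟨Finset.mem_powerset.mpr
          (Finset.singleton_subset_iff.mpr hf0R), Finset.singleton_nonempty f0⟩
      · rw [eprod_singleton]
    obtain ⟨m, hmXS, hmax⟩ := exists_maximal_mul XS hXSne
    have hm0' : m ≠ 0 := (Finset.mem_filter.mp hmXS).2
    obtain ⟨T₀, hT₀mem, hT₀eq⟩ := Finset.mem_image.mp (Finset.mem_filter.mp hmXS).1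
    -- characterize the subsets realizing m
    have hkey : ∀ T ∈ (Rs j).powerset.filter (fun t => t.Nonempty),
        D * eprod T (fun f => f) = m → ∀ f ∈ T, D * f = m := by
      intro T hT hTm f hf
      have hTsub : T ⊆ Rs j := Finset.mem_powerset.mp (Finset.mem_filter.mp hT).1
      have hmf : m * (D * f) = m := by
        rw [← hTm, mul_mul_mul_comm, idemE, eprod_mul_self_mem hf]
      have hDf0 : D * f ≠ 0 := by
        intro h
        rw [h, zeroE'] at hmf
        exact hm0' hmf.symm
      have hDfXS : D * f ∈ XS := by
        refine Finset.mem_filter.mpr ⟨Finset.mem_image.mpr ⟨{f}, ?_, ?_⟩, hDf0⟩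
        · exact Finset.mem_filter.mpr ⟨Finset.mem_powerset.mpr
            (Finset.singleton_subset_iff.mpr (hTsub hf)), Finset.singleton_nonempty f⟩
        · rw [eprod_singleton]
      exact hmax (D * f) hDfXS hmf
    set F : Finset E := (Rs j).filter (fun f => D * f = m) with hF
    have hFne : F.Nonempty := by
      obtain ⟨f, hf⟩ : T₀.Nonempty := (Finset.mem_filter.mp hT₀mem).2
      refine ⟨f, Finset.mem_filter.mpr ⟨?_, hkey T₀ hT₀mem hT₀eq f hf⟩⟩
      exact (Finset.mem_powerset.mp (Finset.mem_filter.mp hT₀mem).1) hf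
    have hfiltereq : ((Rs j).powerset.filter (fun t => t.Nonempty)).filter
        (fun t => D * eprod t (fun f => f) = m) = F.powerset.filter (fun t => t.Nonempty) := by
      ext T
      simp only [Finset.mem_filter, Finset.mem_powerset]
      constructor
      · rintro ⟨⟨hTsub, hTne⟩, hTm⟩
        refine ⟨fun f hf => Finset.mem_filter.mpr ⟨hTsub hf, ?_⟩, hTne⟩
        exact hkey T (Finset.mem_filter.mpr ⟨Finset.mem_powerset.mpr hTsub, hTne⟩) hTm f hf
      · rintro ⟨hTF, hTne⟩
        have hTsub : T ⊆ Rs j := fun f hf => (Finset.mem_filter.mp (hTF hf)).1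
        refine ⟨⟨hTsub, hTne⟩, ?_⟩
        rw [mul_eprod hTne]
        have : eprod T (fun f => D * f) = eprod T (fun _ => m) :=
          eprod_congr (fun f hf => (Finset.mem_filter.mp (hTF hf)).2)
        rw [this, eprod_const hTne]
    have hcoeff1 : ((v j * elt D : ZE E) : MonoidAlgebra ℤ E).coeff m = 1 := by
      rw [mul_comm, hv]
      rw [elt_mul_join D (Rs j) (fun f => f)]
      rw [coeff_comb _ _ _ hm0']
      have : (∑ t ∈ (Rs j).powerset.filter (fun t => t.Nonempty),
          if D * eprod t (fun f => f) = m then (-1 : ℤ) ^ (t.card + 1) else 0)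
          = ∑ t ∈ ((Rs j).powerset.filter (fun t => t.Nonempty)).filter
              (fun t => D * eprod t (fun f => f) = m), (-1 : ℤ) ^ (t.card + 1) :=
        (Finset.sum_filter _ _).symm
      rw [this, hfiltereq]
      exact alt_sum_one hFne
    have hcoeff2 : ((v j * z : ZE E) : MonoidAlgebra ℤ E).coeff m = 0 := by
      apply coeff_of_not_mem_supp
      intro hmem
      obtain ⟨b, hb, c, hc, hmeq⟩ := supp_mul hmem
      obtain ⟨C, hCB, hCne, δ, hδ, hceq⟩ := hzsupp c hc
      have hform : m = (if C.Nonempty then b * (D * eprod C δ) else b * D) := by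
        rw [if_pos hCne, hmeq, hceq]
      have hSJ := hstrictJ b hb C hCB δ hδ m hform hm0'
      -- show D * b = m using maximality
      obtain ⟨Tb, hTbsub, hTbne, hbeq⟩ := supp_join hb
      have hmb : m * b = m := by
        rw [hmeq, mul_right_comm, idemE]
      have hmDb : m * (D * b) = m := by
        rw [← mul_assoc, hSJ.1, hmb]
      have hDb0 : D * b ≠ 0 := by
        intro h
        rw [h, zeroE'] at hmDb
        exact hm0' hmDb.symm
      have hDbXS : D * b ∈ XS := by
        refine Finset.mem_filter.mpr ⟨Finset.mem_image.mpr ⟨Tb, ?_, ?_⟩, hDb0⟩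
        · exact Finset.mem_filter.mpr ⟨Finset.mem_powerset.mpr hTbsub, hTbne⟩
        · rw [← hbeq]
      have hDbm : D * b = m := hmax (D * b) hDbXS hmDb
      exact hSJ.2.2 hCne (by rw [mul_comm b D, hDbm])
    have hfin : ((v j * X : ZE E) : MonoidAlgebra ℤ E).coeff m = 1 := by
      rw [hXz, mul_add, ZE.val_add', MonoidAlgebra.coeff_add, Finsupp.add_apply, hcoeff1, hcoeff2, add_zero]
    rw [hvjX, ZE.val_zero'] at hfin
    rw [MonoidAlgebra.coeff_zero, Finsupp.zero_apply] at hfin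
    exact zero_ne_one hfin
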